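/- arXiv:1704.06375 — 5 statements merged into one kernel-verified Lean document; each statement's English description precedes it below -/
import Mathlib

section
/- For a linear code C of length n over R = F_q + uF_q (q = p^{2m}, p^m ≡ 1 mod 4), the Gray image of its Hermitian dual equals the Hermitian dual of its Gray image: Φ(C^{⊥_H}) = Φ(C)^{⊥_H}. -/
open TrivSqZeroExt

/-- The Gray map `Φ : R^n → F_q^(2n)`. -/
noncomputable def grayMap {F : Type*} [CommRing F] (α : F) (n : ℕ)
    (x : Fin n → DualNumber F) : Fin n × Fin 2 → F :=
  fun j => if j.2 = 0 then α * (x j.1).snd else (x j.1).fst + (x j.1).snd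

/-- Conjugation `(a + ub)‾ = a^(p^m) + u b^(p^m)` on `R = F_q + uF_q`. -/
noncomputable def dnConj {F : Type*} [CommRing F] (p m : ℕ) (z : DualNumber F) :
    DualNumber F :=
  TrivSqZeroExt.inl (z.fst ^ p ^ m) + TrivSqZeroExt.inr (z.snd ^ p ^ m)

/-- The Hermitian dual of a set of words of length `n` over `R`. -/
def hermDualR {F : Type*} [CommRing F] (p m n : ℕ)
    (S : Set (Fin n → DualNumber F)) : Set (Fin n → DualNumber F) :=
  {x | ∀ c ∈ S, ∑ i, x i * dnConj p m (c i) = 0}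

/-- The Hermitian dual of a set of words of length `2n` over `F_q`. -/
def hermDualF {F : Type*} [CommRing F] (p m n : ℕ)
    (S : Set (Fin n × Fin 2 → F)) : Set (Fin n × Fin 2 → F) :=
  {y | ∀ c ∈ S, ∑ j, y j * (c j) ^ p ^ m = 0}

-- key computation
lemma gray_inner_eq {F : Type*} [Field F] (p m n : ℕ) [Fact p.Prime] [CharP F p]
    (α : F) (hαq : α ^ p ^ m = α) (hα2 : α ^ 2 = -1)
    (x c : Fin n → DualNumber F) :
    ∑ j, grayMap α n x j * (grayMap α n c j) ^ p ^ m =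
      (∑ i, x i * dnConj p m (c i)).fst + (∑ i, x i * dnConj p m (c i)).snd := by
  rw [TrivSqZeroExt.fst_sum, TrivSqZeroExt.snd_sum, ← Finset.sum_add_distrib,
    Fintype.sum_prod_type]
  refine Finset.sum_congr rfl fun i _ => ?_
  rw [Fin.sum_univ_two]
  simp only [grayMap, TrivSqZeroExt.fst_mul, TrivSqZeroExt.snd_mul, dnConj,
    TrivSqZeroExt.fst_add, TrivSqZeroExt.snd_add, TrivSqZeroExt.fst_inl,
    TrivSqZeroExt.snd_inl, TrivSqZeroExt.fst_inr, TrivSqZeroExt.snd_inr,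
    smul_eq_mul, MulOpposite.smul_eq_mul_unop, MulOpposite.unop_op]
  norm_num
  rw [mul_pow, hαq, add_pow_char_pow]
  have h2 : α * α = -1 := by rw [← sq]; exact hα2
  ring_nf
  linear_combination ((x i).snd * ((c i).snd)^(p^m)) * h2

lemma eps_conj_sum {F : Type*} [Field F] (p m n : ℕ) (hq0 : p ^ m ≠ 0)
    (x c : Fin n → DualNumber F) :
    (∑ i, x i * dnConj p m (((DualNumber.eps : DualNumber F) • c) i)).fst = 0 ∧
    (∑ i, x i * dnConj p m (((DualNumber.eps : DualNumber F) • c) i)).snd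
      = (∑ i, x i * dnConj p m (c i)).fst := by
  constructor
  · rw [TrivSqZeroExt.fst_sum]
    refine Finset.sum_eq_zero fun i _ => ?_
    simp [dnConj, Pi.smul_apply, smul_eq_mul, TrivSqZeroExt.fst_mul,
      TrivSqZeroExt.fst_add, TrivSqZeroExt.fst_inl, TrivSqZeroExt.fst_inr,
      DualNumber.fst_eps, zero_pow hq0]
  · rw [TrivSqZeroExt.snd_sum, TrivSqZeroExt.fst_sum]
    refine Finset.sum_congr rfl fun i _ => ?_
    simp [dnConj, Pi.smul_apply, smul_eq_mul, TrivSqZeroExt.fst_mul,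
      TrivSqZeroExt.snd_mul, TrivSqZeroExt.fst_add, TrivSqZeroExt.snd_add,
      TrivSqZeroExt.fst_inl, TrivSqZeroExt.snd_inl, TrivSqZeroExt.fst_inr,
      TrivSqZeroExt.snd_inr, DualNumber.fst_eps, DualNumber.snd_eps,
      zero_pow hq0, MulOpposite.smul_eq_mul_unop, MulOpposite.unop_op]
    ring


/-- For a linear code `C` of length `n` over `R = F_q + uF_q`,
`Φ(C^{⊥_H}) = Φ(C)^{⊥_H}`. -/
theorem stmt6 (p m n : ℕ) [Fact p.Prime] (hm : 1 ≤ m)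
    (F : Type*) [Field F] [Fintype F] (hF : Fintype.card F = p ^ (2 * m))
    (hpm : p ^ m % 4 = 1) (α : F) (hα : α ^ 2 = -1)
    (C : Submodule (DualNumber F) (Fin n → DualNumber F)) :
    grayMap α n '' hermDualR p m n (C : Set (Fin n → DualNumber F)) =
      hermDualF p m n (grayMap α n '' (C : Set (Fin n → DualNumber F))) := by
  have hp : p.Prime := Fact.out
  haveI hprF : Fact (ringChar F).Prime := ⟨CharP.char_is_prime F _⟩
  obtain ⟨k, -, hcard⟩ := FiniteField.card F (ringChar F)
  have hpr : p = ringChar F := by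
    have h1 : p ∣ (ringChar F) ^ (k : ℕ) := by
      rw [← hcard, hF]; exact dvd_pow_self p (by omega)
    exact (Nat.prime_dvd_prime_iff_eq hp hprF.out).1 (hp.dvd_of_dvd_pow h1)
  haveI : CharP F p := hpr ▸ ringChar.charP F
  have hq0 : p ^ m ≠ 0 := pow_ne_zero _ hp.pos.ne'
  have h2 : α * α = -1 := by rw [← sq]; exact hα
  have hαq : α ^ p ^ m = α := by
    have h4 : α ^ 4 = 1 := by
      have : α ^ 4 = (α ^ 2) ^ 2 := by ring
      rw [this, hα]; ring
    have hdm : p ^ m = 4 * (p ^ m / 4) + 1 := by omega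
    rw [hdm, pow_succ, pow_mul, h4, one_pow, one_mul]
  ext y
  constructor
  · rintro ⟨x, hx, rfl⟩ z ⟨c, hc, rfl⟩
    rw [gray_inner_eq p m n α hαq hα, hx c hc]
    simp
  · intro hy
    set x : Fin n → DualNumber F :=
      fun i => (⟨y (i, 1) + α * y (i, 0), -(α * y (i, 0))⟩ : DualNumber F) with hxdef
    have hΦ : grayMap α n x = y := by
      funext j
      obtain ⟨i, k⟩ := j
      fin_cases k <;> simp [grayMap, hxdef] <;> linear_combination (-(y (i, 0))) * h2
    refine ⟨x, ?_, hΦ⟩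
    intro c hc
    have hA := hy _ ⟨c, hc, rfl⟩
    have hB := hy _ ⟨(DualNumber.eps : DualNumber F) • c, C.smul_mem _ hc, rfl⟩
    rw [← hΦ, gray_inner_eq p m n α hαq hα] at hA hB
    obtain ⟨e1, e2⟩ := eps_conj_sum p m n hq0 x c
    rw [e1, e2, zero_add] at hB
    refine TrivSqZeroExt.ext ?_ ?_ <;>
        simp only [TrivSqZeroExt.fst_zero, TrivSqZeroExt.snd_zero]
    · exact hB
    · rw [hB, zero_add] at hA; exact hA
end

section
/- If C is a Hermitian self-dual linear code of length n over R = F_q + uF_q, then its Gray image Φ(C) is a Hermitian self-dual linear code of length 2n over F_q; likewise if C is Hermitian dual-containing (C^{⊥_H} ⊆ C), then Φ(C)^{⊥_H} ⊆ Φ(C). -/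
open TrivSqZeroExt

lemma stmt8_fst_conj {F : Type*} [CommRing F] (p m : ℕ) (z w : DualNumber F) :
    (z * dnConj p m w).fst = z.fst * w.fst ^ p ^ m := by
  simp [dnConj, fst_mul]

lemma stmt8_snd_conj {F : Type*} [CommRing F] (p m : ℕ) (z w : DualNumber F) :
    (z * dnConj p m w).snd = z.fst * w.snd ^ p ^ m + w.fst ^ p ^ m * z.snd := by
  simp [dnConj, snd_mul, smul_eq_mul]; ring

/-- If `C` is Hermitian self-dual over `R`, then `Φ(C)` is Hermitian
self-dual over `F_q`; and if `C` is Hermitian dual-containing, so is `Φ(C)`. -/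
theorem stmt8 (p m n : ℕ) [Fact p.Prime] (hm : 1 ≤ m)
    (F : Type*) [Field F] [Fintype F] (hF : Fintype.card F = p ^ (2 * m))
    (hpm : p ^ m % 4 = 1) (α : F) (hα : α ^ 2 = -1)
    (C : Submodule (DualNumber F) (Fin n → DualNumber F)) :
    (hermDualR p m n (C : Set (Fin n → DualNumber F)) = (C : Set (Fin n → DualNumber F)) →
      hermDualF p m n (grayMap α n '' (C : Set (Fin n → DualNumber F))) =
        grayMap α n '' (C : Set (Fin n → DualNumber F))) ∧
    (hermDualR p m n (C : Set (Fin n → DualNumber F)) ⊆ (C : Set (Fin n → DualNumber F)) →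
      hermDualF p m n (grayMap α n '' (C : Set (Fin n → DualNumber F))) ⊆
        grayMap α n '' (C : Set (Fin n → DualNumber F))) := by
  -- characteristic of `F` is `p`
  haveI : CharP F (ringChar F) := ringChar.charP F
  have hrp : (ringChar F).Prime := CharP.char_is_prime F (ringChar F)
  have hcharp : CharP F p := by
    obtain ⟨k, hk, hcard⟩ := FiniteField.card F (ringChar F)
    have hdvd : ringChar F ∣ p ^ (2 * m) := by
      rw [hF] at hcard
      exact hcard ▸ dvd_pow_self (ringChar F) k.pos.ne'
    have := (Nat.prime_dvd_prime_iff_eq hrp (Fact.out : p.Prime)).mp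
      (hrp.dvd_of_dvd_pow hdvd)
    rwa [this] at ‹CharP F (ringChar F)›
  haveI := hcharp
  have frob : ∀ s t : F, (s + t) ^ p ^ m = s ^ p ^ m + t ^ p ^ m := fun s t =>
    add_pow_char_pow s t p m
  -- α is fixed by the Frobenius
  have hα4 : α ^ 4 = 1 := by
    have : α ^ 4 = (α ^ 2) ^ 2 := by ring
    rw [this, hα]; ring
  have hαq : α ^ p ^ m = α := by
    have h4 : p ^ m = 4 * (p ^ m / 4) + 1 := by omega
    rw [h4, pow_succ, pow_mul, hα4, one_pow, one_mul]
  -- unfolding the Gray-image inner product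
  have key : ∀ x c : Fin n → DualNumber F,
      (∑ j, grayMap α n x j * (grayMap α n c j) ^ p ^ m) =
        (∑ i, x i * dnConj p m (c i)).fst + (∑ i, x i * dnConj p m (c i)).snd := by
    intro x c
    rw [fst_sum, snd_sum, ← Finset.sum_add_distrib, Fintype.sum_prod_type]
    refine Finset.sum_congr rfl fun i _ => ?_
    rw [Fin.sum_univ_two]
    simp only [grayMap, stmt8_fst_conj, stmt8_snd_conj]
    norm_num
    rw [mul_pow, hαq, frob]
    linear_combination ((x i).snd * (c i).snd ^ p ^ m) * hα
  -- the scalar `u = inr 1`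
  set u : DualNumber F := TrivSqZeroExt.inr 1 with hu
  have key2 : ∀ x c : Fin n → DualNumber F,
      (∑ j, grayMap α n x j * (grayMap α n (u • c) j) ^ p ^ m) =
        (∑ i, x i * dnConj p m (c i)).fst := by
    intro x c
    rw [fst_sum, Fintype.sum_prod_type]
    refine Finset.sum_congr rfl fun i _ => ?_
    rw [Fin.sum_univ_two]
    have h1 : ((u • c) i).fst = 0 := by simp [hu, Pi.smul_apply, smul_eq_mul, fst_mul]
    have h2 : ((u • c) i).snd = (c i).fst := by
      simp [hu, Pi.smul_apply, smul_eq_mul, snd_mul]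
    simp only [grayMap, stmt8_fst_conj, h1, h2]
    norm_num
    rw [mul_pow, hαq]
    linear_combination ((x i).snd * (c i).fst ^ p ^ m) * hα
  -- main set identity : Φ(C)^⊥ = Φ(C^⊥)
  have main : hermDualF p m n (grayMap α n '' (C : Set (Fin n → DualNumber F))) =
      grayMap α n '' hermDualR p m n (C : Set (Fin n → DualNumber F)) := by
    apply Set.Subset.antisymm
    · intro y hy
      -- build the preimage of y
      set x : Fin n → DualNumber F := fun i =>
        TrivSqZeroExt.inl (y (i, 1) + α * y (i, 0)) +
          TrivSqZeroExt.inr (-α * y (i, 0)) with hx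
      have hΦx : grayMap α n x = y := by
        funext j
        rcases j with ⟨i, s⟩
        fin_cases s <;>
          simp [grayMap, hx] <;> linear_combination (- y (i, 0)) * hα
      refine ⟨x, ?_, hΦx⟩
      intro c hc
      have e1 := hy (grayMap α n c) ⟨c, hc, rfl⟩
      have e2 := hy (grayMap α n (u • c)) ⟨u • c, C.smul_mem u hc, rfl⟩
      rw [← hΦx] at e1 e2
      rw [key x c] at e1
      rw [key2 x c] at e2
      exact TrivSqZeroExt.ext (by simpa using e2) (by
        have := e1; rw [e2, zero_add] at this; simpa using this)
    · rintro y ⟨x, hxd, rfl⟩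
      rintro z ⟨c, hc, rfl⟩
      rw [key x c, hxd c hc]
      simp
  refine ⟨fun h => ?_, fun h => ?_⟩
  · rw [main, h]
  · rw [main]
    exact Set.image_mono h
end

section
/- For a linear code C of length n over a finite chain ring R (a finite Frobenius ring), |C| · |C^{⊥_H}| = |R|^n, where the Hermitian dual is taken with respect to a ring involution. -/
/-- For a linear code `C` of length `n` over a finite chain ring `R`,
`|C| · |C^{⊥_H}| = |R|^n`, where the Hermitian dual is taken with respect to a
ring involution. -/
theorem stmt9 (R : Type*) [CommRing R] [Fintype R]
    (hchain : ∀ I J : Ideal R, I ≤ J ∨ J ≤ I)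
    (σ : R ≃+* R) (hσ : ∀ r, σ (σ r) = r)
    (n : ℕ) (C : Submodule R (Fin n → R)) :
    Nat.card C *
      Nat.card {x : Fin n → R | ∀ c ∈ C, ∑ i, x i * σ (c i) = 0} =
      (Fintype.card R) ^ n := by
  classical
  rcases subsingleton_or_nontrivial R with hR | hR
  · -- trivial ring
    haveI : Subsingleton (Fin n → R) := ⟨fun a b => funext fun i => Subsingleton.elim _ _⟩
    have h1 : Nat.card C = 1 := by
      rw [Nat.card_eq_one_iff_unique]
      exact ⟨⟨fun a b => Subsingleton.elim _ _⟩, ⟨0, C.zero_mem⟩⟩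
    have h2 : Nat.card {x : Fin n → R | ∀ c ∈ C, ∑ i, x i * σ (c i) = 0} = 1 := by
      rw [Nat.card_eq_one_iff_unique]
      refine ⟨⟨fun a b => Subsingleton.elim _ _⟩, ⟨0, fun c _ => ?_⟩⟩
      exact Subsingleton.elim _ _
    have h3 : Fintype.card R = 1 := Fintype.card_eq_one_iff_nonempty_unique.mpr ⟨⟨⟨0⟩, fun a => Subsingleton.elim _ _⟩⟩
    rw [h1, h2, h3, one_pow, mul_one]
  -- Step 1: a minimal nonzero "element" s : every nonzero principal ideal contains s
  obtain ⟨s, hs0, hsmin⟩ : ∃ s : R, s ≠ 0 ∧ ∀ r : R, r ≠ 0 → s ∈ Ideal.span {r} := by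
    obtain ⟨s, hs0, hmin⟩ := Finset.exists_min_image
      (Finset.univ.filter fun r : R => r ≠ 0)
      (fun r => Nat.card (Ideal.span {r} : Ideal R))
      ⟨(exists_ne (0 : R)).choose, by simp [(exists_ne (0 : R)).choose_spec]⟩
    refine ⟨s, by simpa using hs0, fun r hr => ?_⟩
    rcases hchain (Ideal.span {s}) (Ideal.span {r}) with h | h
    · exact h (Ideal.mem_span_singleton_self s)
    · have hcard : Nat.card (Ideal.span {s} : Ideal R) ≤ Nat.card (Ideal.span {r} : Ideal R) :=
        hmin r (by simp [hr])
      have hsub : ((Ideal.span {r} : Ideal R) : Set R) ⊆ ((Ideal.span {s} : Ideal R) : Set R) := h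
      have heq : ((Ideal.span {r} : Ideal R) : Set R) = ((Ideal.span {s} : Ideal R) : Set R) :=
        Set.eq_of_subset_of_ncard_le hsub
          (by rw [← Nat.card_coe_set_eq, ← Nat.card_coe_set_eq]; exact hcard)
          (Set.toFinite _)
      have : s ∈ ((Ideal.span {r} : Ideal R) : Set R) := by
        rw [heq]; exact Ideal.mem_span_singleton_self s
      exact this
  -- Step 2: a generating character
  obtain ⟨χ, hχ⟩ : ∃ χ : AddChar R ℂ, χ s ≠ 1 := AddChar.exists_apply_ne_zero.mpr hs0
  have key : ∀ r : R, (∀ a : R, χ (a * r) = 1) → r = 0 := by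
    intro r h
    by_contra hr
    obtain ⟨a, ha⟩ := Ideal.mem_span_singleton'.mp (hsmin r hr)
    exact hχ (by rw [← ha]; exact h a)
  -- Step 3: the map from vectors to characters of R^n
  set Φ : (Fin n → R) → AddChar (Fin n → R) ℂ := fun x =>
    { toFun := fun y => χ (∑ i, x i * y i)
      map_zero_eq_one' := by simp
      map_add_eq_mul' := fun y z => by
        show χ (∑ i, x i * (y i + z i)) = χ (∑ i, x i * y i) * χ (∑ i, x i * z i)
        rw [← AddChar.map_add_eq_mul]
        congr 1
        rw [← Finset.sum_add_distrib]
        exact Finset.sum_congr rfl fun i _ => mul_add _ _ _ } with hΦdef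
  have hΦapp : ∀ x y, Φ x y = χ (∑ i, x i * y i) := fun _ _ => rfl
  have hΦinj : Function.Injective Φ := by
    intro x y hxy
    funext i
    have h1 : ∀ a : R, χ (x i * a) = χ (y i * a) := by
      intro a
      have h := congrArg (fun ψ : AddChar (Fin n → R) ℂ => ψ (Pi.single i a : Fin n → R)) hxy
      simp only [hΦapp] at h
      have hsum : ∀ z : Fin n → R, ∑ j, z j * (Pi.single i a : Fin n → R) j = z i * a := by
        intro z
        rw [Finset.sum_eq_single i]
        · simp
        · intro b _ hb; simp [Pi.single_eq_of_ne hb]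
        · simp
      rwa [hsum, hsum] at h
    have h2 : ∀ a : R, χ (a * (x i - y i)) = 1 := by
      intro a
      have hne : χ (y i * a) ≠ 0 := by
        intro h0
        have h01 := χ.map_add_eq_mul (y i * a) (-(y i * a))
        simp [h0] at h01
      rw [mul_sub, mul_comm a (x i), mul_comm a (y i), AddChar.map_sub_eq_div, h1 a,
        div_self hne]
    have h3 : x i - y i = 0 := key _ h2
    exact sub_eq_zero.mp h3
  have hΦbij : Function.Bijective Φ := by
    refine (Fintype.bijective_iff_injective_and_card Φ).mpr ⟨hΦinj, ?_⟩
    exact (AddChar.card_eq (α := Fin n → R)).symm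
  -- Step 4: the image of C under coordinatewise σ, as an additive subgroup
  set D : AddSubgroup (Fin n → R) :=
    { carrier := (fun c => fun i => σ (c i)) '' (C : Set (Fin n → R))
      zero_mem' := ⟨0, C.zero_mem, by funext i; simp⟩
      add_mem' := by
        rintro _ _ ⟨c, hc, rfl⟩ ⟨d, hd, rfl⟩
        exact ⟨c + d, C.add_mem hc hd, by funext i; simp⟩
      neg_mem' := by
        rintro _ ⟨c, hc, rfl⟩
        exact ⟨-c, C.neg_mem hc, by funext i; simp⟩ } with hDdef
  have hDsmul : ∀ (a : R) (d : Fin n → R), d ∈ D → (fun i => a * d i) ∈ D := by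
    rintro a _ ⟨c, hc, rfl⟩
    refine ⟨σ a • c, C.smul_mem _ hc, ?_⟩
    funext i
    simp [hσ, mul_comm]
  have hcardCD : Nat.card C = Nat.card D := by
    refine Nat.card_eq_of_bijective (fun c => ⟨fun i => σ (c.1 i), ⟨c.1, c.2, rfl⟩⟩) ⟨?_, ?_⟩
    · intro a b hab
      have := congrArg Subtype.val hab
      ext i
      have h2 := congrFun this i
      simpa using σ.injective h2
    · rintro ⟨_, c, hc, rfl⟩
      exact ⟨⟨c, hc⟩, rfl⟩
  -- membership in the dual in terms of D
  set N : Set (Fin n → R) := {x : Fin n → R | ∀ c ∈ C, ∑ i, x i * σ (c i) = 0} with hNdef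
  have hN : ∀ x : Fin n → R, x ∈ N ↔ ∀ d ∈ D, ∑ i, x i * d i = 0 := by
    intro x
    constructor
    · rintro h _ ⟨c, hc, rfl⟩
      exact h c hc
    · intro h c hc
      exact h _ ⟨c, hc, rfl⟩
  -- Step 5: N is in bijection with characters vanishing on D
  set V : Set (AddChar (Fin n → R) ℂ) := {ψ | ∀ d ∈ D, ψ d = 1} with hVdef
  have hNV : Nat.card N = Nat.card V := by
    have hmem : ∀ x : N, Φ x.1 ∈ V := by
      rintro ⟨x, hx⟩ d hd
      have : ∑ i, x i * d i = 0 := (hN x).mp hx d hd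
      rw [hΦapp, this]
      exact χ.map_zero_eq_one
    refine Nat.card_eq_of_bijective (fun x => ⟨Φ x.1, hmem x⟩) ⟨?_, ?_⟩
    · intro a b hab
      exact Subtype.ext (hΦinj (congrArg Subtype.val hab))
    · rintro ⟨ψ, hψ⟩
      obtain ⟨x, rfl⟩ := hΦbij.2 ψ
      refine ⟨⟨x, (hN x).mpr ?_⟩, rfl⟩
      intro d hd
      refine key _ fun a => ?_
      have h1 : a * ∑ i, x i * d i = ∑ i, x i * (a * d i) := by
        rw [Finset.mul_sum]
        exact Finset.sum_congr rfl fun i _ => by ring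
      rw [h1]
      exact hψ _ (hDsmul a d hd)
  -- Step 6: characters vanishing on D are in bijection with characters of the quotient
  have hVQ : Nat.card V = Nat.card ((Fin n → R) ⧸ D) := by
    have hlift : ∀ ψ : AddChar (Fin n → R) ℂ, ψ ∈ V →
        ∃ φ : AddChar ((Fin n → R) ⧸ D) ℂ,
          ∀ x : Fin n → R, φ (QuotientAddGroup.mk' D x) = ψ x := by
      intro ψ hψ
      have hrel : ∀ a b : Fin n → R, (QuotientAddGroup.leftRel D).r a b → ψ a = ψ b := by
        intro a b hab
        rw [QuotientAddGroup.leftRel_apply] at hab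
        have hb : ψ b = ψ a * ψ (-a + b) := by
          rw [← AddChar.map_add_eq_mul]
          congr 1
          abel
        rw [hb, hψ _ hab, mul_one]
      refine ⟨{ toFun := Quotient.lift (⇑ψ) hrel
                map_zero_eq_one' := ?_
                map_add_eq_mul' := ?_ }, fun x => rfl⟩
      · exact ψ.map_zero_eq_one
      · intro a b
        refine QuotientAddGroup.induction_on a fun x =>
          QuotientAddGroup.induction_on b fun y => ?_
        exact ψ.map_add_eq_mul x y
    have hbij : Function.Bijective
        (fun ψ : AddChar ((Fin n → R) ⧸ D) ℂ =>
          (⟨ψ.compAddMonoidHom (QuotientAddGroup.mk' D), by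
            intro d hd
            have h0 : (QuotientAddGroup.mk' D) d = 0 := (QuotientAddGroup.eq_zero_iff d).mpr hd
            show ψ ((QuotientAddGroup.mk' D) d) = 1
            rw [h0]
            exact ψ.map_zero_eq_one⟩ : V)) := by
      constructor
      · intro a b hab
        exact AddChar.compAddMonoidHom_injective_left _ (QuotientAddGroup.mk'_surjective D)
          (congrArg Subtype.val hab)
      · rintro ⟨ψ, hψ⟩
        obtain ⟨φ, hφ⟩ := hlift ψ hψ
        exact ⟨φ, Subtype.ext (DFunLike.ext _ _ hφ)⟩
    have h := Nat.card_eq_of_bijective _ hbij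
    haveI : Fintype ((Fin n → R) ⧸ D) := Fintype.ofFinite _
    rw [← h, Nat.card_eq_fintype_card, Nat.card_eq_fintype_card, AddChar.card_eq]
  -- Step 7: conclude by Lagrange
  have hL : Nat.card (Fin n → R) = Nat.card ((Fin n → R) ⧸ D) * Nat.card D :=
    AddSubgroup.card_eq_card_quotient_mul_card_addSubgroup D
  have : Nat.card C * Nat.card N = Nat.card (Fin n → R) := by
    rw [hcardCD, hNV, hVQ, hL, mul_comm]
  rw [this, Nat.card_eq_fintype_card, Fintype.card_fun, Fintype.card_fin]
end

section
/- Let R be a finite chain ring with maximal ideal (γ) of nilpotency index t, and let C be a self-dual linear code of length n over R. Then for 0 ≤ i ≤ t−1 and 0 ≤ j ≤ t−1−i, the Euclidean dual of the projection of (C : γ^{t−1−i}) to the residue field is contained in the projection of (C : γ^{i+j}); in particular, the projection of (C : γ^{t−1}) contains its own dual. -/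
section Aux
variable {R : Type*} [CommRing R] [IsLocalRing R]

-- B: nilpotency index bound
lemma lemB {γ : R} {t : ℕ} (htnil' : γ ^ (t - 1) ≠ 0) {s : ℕ} (hs : γ ^ s = 0) : t ≤ s := by
  by_contra h
  push_neg at h
  apply htnil'
  have hts : t - 1 = s + (t - 1 - s) := by omega
  rw [hts, pow_add, hs, zero_mul]

-- A: every nonzero element is γ^l times a unit
lemma lemA {γ : R} (hγ : IsLocalRing.maximalIdeal R = Ideal.span {γ})
    {t : ℕ} (htnil : γ ^ t = 0) {c : R} (hc : c ≠ 0) :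
    ∃ l, l < t ∧ ∃ u : Rˣ, c = γ ^ l * u := by
  set P : ℕ → Prop := fun l => c ∈ Ideal.span {γ ^ l} with hP
  have hP0 : P 0 := by simp [hP, Ideal.span_singleton_one]
  have hPt : ¬ P t := by
    simp [hP, htnil, Ideal.span_singleton_eq_bot.mpr rfl]
    exact hc
  classical
  set l := Nat.findGreatest P t with hl
  have hPl : P l := Nat.findGreatest_spec (Nat.zero_le t) hP0
  have hlt : l < t := lt_of_le_of_ne (Nat.findGreatest_le t) (fun h => hPt (h ▸ hPl))
  obtain ⟨v, hv⟩ := Ideal.mem_span_singleton'.mp hPl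
  have hvu : IsUnit v := by
    by_contra hnv
    have : v ∈ IsLocalRing.maximalIdeal R := hnv
    rw [hγ, Ideal.mem_span_singleton'] at this
    obtain ⟨w, hw⟩ := this
    have : P (l + 1) := by
      rw [hP]
      exact Ideal.mem_span_singleton'.mpr ⟨w, by rw [← hv, ← hw]; ring⟩
    exact Nat.findGreatest_is_greatest (Nat.lt_succ_self l) hlt this
  exact ⟨l, hlt, hvu.unit, by rw [← hv]; rw [IsUnit.unit_spec]; ring⟩

-- C: annihilator of γ^(t-k) is (γ^k)
lemma lemC {γ : R} (hγ : IsLocalRing.maximalIdeal R = Ideal.span {γ})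
    {t : ℕ} (htnil : γ ^ t = 0) (htnil' : γ ^ (t - 1) ≠ 0)
    {k : ℕ} (hk : k ≤ t) {c : R} (h : γ ^ (t - k) * c = 0) :
    ∃ d, c = γ ^ k * d := by
  by_cases hc : c = 0
  · exact ⟨0, by simp [hc]⟩
  obtain ⟨l, hlt, u, hu⟩ := lemA hγ htnil hc
  have h0 : γ ^ (t - k + l) * (u : R) = 0 := by
    rw [pow_add, mul_assoc, ← hu, h]
  have h1 : γ ^ (t - k + l) = 0 := by
    have := congrArg (· * ((u⁻¹ : Rˣ) : R)) h0
    simpa [mul_assoc] using this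
  have h2 : t ≤ t - k + l := lemB htnil' h1
  have hkl : k ≤ l := by omega
  exact ⟨γ ^ (l - k) * u, by rw [hu, ← mul_assoc, ← pow_add]; congr 2; omega⟩

-- every ideal is (γ^k)
lemma ideal_eq {γ : R} (hγ : IsLocalRing.maximalIdeal R = Ideal.span {γ})
    {t : ℕ} (htnil : γ ^ t = 0) (I : Ideal R) :
    ∃ k, k ≤ t ∧ I = Ideal.span {γ ^ k} := by
  classical
  by_cases hI : I = ⊥
  · exact ⟨t, le_rfl, by rw [hI, htnil, Ideal.span_singleton_eq_bot.mpr rfl]⟩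
  have hex : ∃ l, l < t ∧ γ ^ l ∈ I := by
    obtain ⟨c, hcI, hc0⟩ := Submodule.exists_mem_ne_zero_of_ne_bot hI
    obtain ⟨l, hlt, u, hu⟩ := lemA hγ htnil hc0
    refine ⟨l, hlt, ?_⟩
    have : γ ^ l = c * ((u⁻¹ : Rˣ) : R) := by rw [hu]; simp [mul_assoc]
    rw [this]
    exact Ideal.mul_mem_right _ _ hcI
  obtain ⟨l0, hl0t, hl0I⟩ := hex
  -- take minimal such l
  have hexl : ∃ l, γ ^ l ∈ I := ⟨l0, hl0I⟩
  set k := Nat.find hexl with hkdef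
  have hkI : γ ^ k ∈ I := Nat.find_spec hexl
  have hkle : k ≤ t := le_trans (Nat.find_min' hexl hl0I) (le_of_lt hl0t)
  refine ⟨k, hkle, le_antisymm ?_ ?_⟩
  · intro c hcI
    by_cases hc0 : c = 0
    · simp [hc0]
    obtain ⟨l, hlt, u, hu⟩ := lemA hγ htnil hc0
    have hlI : γ ^ l ∈ I := by
      have : γ ^ l = c * ((u⁻¹ : Rˣ) : R) := by rw [hu]; simp [mul_assoc]
      rw [this]; exact Ideal.mul_mem_right _ _ hcI
    have hkl : k ≤ l := Nat.find_min' hexl hlI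
    rw [hu]
    exact Ideal.mem_span_singleton'.mpr ⟨γ ^ (l - k) * u, by rw [mul_comm, ← mul_assoc, ← pow_add]; congr 2; omega⟩
  · rw [Ideal.span_le, Set.singleton_subset_iff]
    exact hkI

-- Baer's criterion for R over itself
lemma baerR {γ : R} (hγ : IsLocalRing.maximalIdeal R = Ideal.span {γ})
    {t : ℕ} (htnil : γ ^ t = 0) (htnil' : γ ^ (t - 1) ≠ 0) :
    Module.Baer R R := by
  intro I g
  obtain ⟨k, hkt, hI⟩ := ideal_eq hγ htnil I
  subst hI
  have hmem : γ ^ k ∈ Ideal.span {γ ^ k} := Ideal.mem_span_singleton_self _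
  set c := g ⟨γ ^ k, hmem⟩ with hc
  have hann : γ ^ (t - k) * c = 0 := by
    have : (γ ^ (t - k) • (⟨γ ^ k, hmem⟩ : Ideal.span {γ ^ k})) = 0 := by
      apply Subtype.ext
      show γ ^ (t - k) • γ ^ k = (0 : R)
      rw [smul_eq_mul, ← pow_add]
      have : t - k + k = t := by omega
      rw [this, htnil]
    calc γ ^ (t - k) * c = g (γ ^ (t - k) • ⟨γ ^ k, hmem⟩) := by rw [map_smul]; rfl
    _ = 0 := by rw [this, map_zero]
  obtain ⟨d, hd⟩ := lemC hγ htnil htnil' hkt hann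
  refine ⟨LinearMap.toSpanSingleton R R d, ?_⟩
  intro x hx
  obtain ⟨a, ha⟩ := Ideal.mem_span_singleton'.mp hx
  have hxa : (⟨x, hx⟩ : Ideal.span {γ ^ k}) = a • ⟨γ ^ k, hmem⟩ := by
    apply Subtype.ext
    show x = a • γ ^ k
    rw [smul_eq_mul, ha]
  rw [hxa, map_smul]
  show x • d = a • c
  rw [smul_eq_mul, smul_eq_mul, ← ha, hd]
  ring

end Aux

section Ext
variable {R : Type*} [CommRing R]

lemma extend_pair (hb : Module.Baer R R) {n : ℕ} {P : Type*} [AddCommGroup P] [Module R P]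
    (π : P →ₗ[R] (Fin n → R)) (ψ : P →ₗ[R] R) (h : ∀ p, π p = 0 → ψ p = 0) :
    ∃ w : Fin n → R, ∀ p, ∑ k, w k * π p k = ψ p := by
  classical
  have hker : LinearMap.ker π ≤ LinearMap.ker ψ := fun p hp => h p hp
  set φ₀ : (P ⧸ LinearMap.ker π) →ₗ[R] R := Submodule.liftQ _ ψ hker with hφ₀
  set φ : ↥(LinearMap.range π) →ₗ[R] R :=
    φ₀ ∘ₗ (LinearMap.quotKerEquivRange π).symm.toLinearMap with hφ
  obtain ⟨Φ, hΦ⟩ := hb.extension_property (LinearMap.range π).subtype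
    (Submodule.injective_subtype _) φ
  refine ⟨fun k => Φ (fun j => if k = j then 1 else 0), fun p => ?_⟩
  have h1 : Φ (π p) = ψ p := by
    have hmem : π p ∈ LinearMap.range π := LinearMap.mem_range_self π p
    have h2 : Φ ((LinearMap.range π).subtype ⟨π p, hmem⟩) = φ ⟨π p, hmem⟩ :=
      congrFun (congrArg (fun f => f.toFun) hΦ) ⟨π p, hmem⟩
    have h3 : φ ⟨π p, hmem⟩ = ψ p := by
      rw [hφ]
      simp only [LinearMap.coe_comp, Function.comp_apply, LinearEquiv.coe_coe]
      rw [LinearMap.quotKerEquivRange_symm_apply_image π p hmem]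
      simp [φ₀]
    exact h2.trans h3
  calc ∑ k, Φ (fun j => if k = j then 1 else 0) * π p k
      = ∑ k, Φ (π p k • fun j => if k = j then (1:R) else 0) := by
        apply Finset.sum_congr rfl
        intro k _
        rw [map_smul, smul_eq_mul, mul_comm]
    _ = Φ (∑ k, π p k • fun j => if k = j then (1:R) else 0) := (map_sum Φ _ _).symm
    _ = Φ (π p) := by rw [← pi_eq_sum_univ (π p)]
    _ = ψ p := h1

end Ext

section Main
variable {R : Type*} [CommRing R] [IsLocalRing R]

lemma main_incl (γ : R) (hγ : IsLocalRing.maximalIdeal R = Ideal.span {γ})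
    (t : ℕ) (ht : 1 ≤ t) (htnil : γ ^ t = 0) (htnil' : γ ^ (t - 1) ≠ 0)
    (n : ℕ) (C : Submodule R (Fin n → R))
    (hsd : (C : Set (Fin n → R)) = {x | ∀ c ∈ C, ∑ i, x i * c i = 0})
    (i : ℕ) (hi : i ≤ t - 1) :
    {x : Fin n → IsLocalRing.ResidueField R |
        ∀ c ∈ (fun e : Fin n → R => fun k : Fin n => IsLocalRing.residue R (e k)) ''
          {e | (fun k => γ ^ (t - 1 - i) * e k) ∈ C}, ∑ k, x k * c k = 0} ⊆
      (fun e : Fin n → R => fun k : Fin n => IsLocalRing.residue R (e k)) ''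
        {e | (fun k => γ ^ i * e k) ∈ C} := by
  classical
  intro x hx
  -- lift x
  have hsur : Function.Surjective (IsLocalRing.residue R) := Ideal.Quotient.mk_surjective
  choose x' hx' using fun k => hsur (x k)
  -- reformulated hypothesis
  have hdual : ∀ e : Fin n → R, ((fun k => γ ^ (t - 1 - i) * e k) ∈ C) →
      ∃ r, ∑ k, x' k * e k = γ * r := by
    intro e he
    have h1 := hx (fun k => IsLocalRing.residue R (e k)) ⟨e, he, rfl⟩
    have h2 : IsLocalRing.residue R (∑ k, x' k * e k) = 0 := by
      rw [map_sum]
      simp only [map_mul, hx']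
      exact h1
    have h3 : (∑ k, x' k * e k) ∈ IsLocalRing.maximalIdeal R :=
      Ideal.Quotient.eq_zero_iff_mem.mp h2
    rw [hγ, Ideal.mem_span_singleton'] at h3
    obtain ⟨r, hr⟩ := h3
    exact ⟨r, by rw [← hr]; ring⟩
  -- key orthogonality
  have key : ∀ c : Fin n → R, c ∈ C → ∀ u : Fin n → R,
      (∀ k, γ ^ i * c k = γ ^ (t - 1) * u k) → ∑ k, x' k * (γ ^ i * c k) = 0 := by
    intro c hc u hucv
    have hz : ∀ k, ∃ z, γ ^ (t - 1 - i) * u k - c k = γ ^ (t - i) * z := by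
      intro k
      apply lemC hγ htnil htnil' (show t - i ≤ t by omega)
      have hti : t - (t - i) = i := by omega
      rw [hti, mul_sub]
      have h1 : γ ^ i * (γ ^ (t - 1 - i) * u k) = γ ^ (t - 1) * u k := by
        rw [← mul_assoc, ← pow_add]
        congr 2
        omega
      rw [h1, ← hucv k, sub_self]
    choose z hzk using hz
    set e : Fin n → R := fun k => u k - γ * z k with hedef
    have he : (fun k => γ ^ (t - 1 - i) * e k) ∈ C := by
      have heq : (fun k => γ ^ (t - 1 - i) * e k) = c := by
        funext k
        have h2 : γ ^ (t - 1 - i) * γ = γ ^ (t - i) := by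
          rw [← pow_succ]
          congr 1
          omega
        show γ ^ (t - 1 - i) * (u k - γ * z k) = c k
        have h3 := hzk k
        rw [mul_sub, ← mul_assoc, h2]
        linear_combination h3
      rw [heq]
      exact hc
    obtain ⟨r, hr⟩ := hdual e he
    have hce : ∑ k, x' k * (γ ^ i * c k) = γ ^ (t - 1) * ∑ k, x' k * u k := by
      rw [Finset.mul_sum]
      apply Finset.sum_congr rfl
      intro k _
      rw [hucv k]
      ring
    have hue : ∑ k, x' k * u k = (∑ k, x' k * e k) + γ * ∑ k, x' k * z k := by
      rw [Finset.mul_sum, ← Finset.sum_add_distrib]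
      apply Finset.sum_congr rfl
      intro k _
      show x' k * u k = x' k * (u k - γ * z k) + γ * (x' k * z k)
      ring
    rw [hce, hue, hr]
    have hts : γ ^ (t - 1) * (γ * r + γ * ∑ k, x' k * z k)
        = γ ^ t * (r + ∑ k, x' k * z k) := by
      have : γ ^ (t - 1) * γ = γ ^ t := by
        rw [← pow_succ]
        congr 1
        omega
      rw [← this]
      ring
    rw [hts, htnil, zero_mul]
  -- set up the extension problem
  set π : ((Fin n → R) × C) →ₗ[R] (Fin n → R) :=
    { toFun := fun p => fun k => γ ^ (t - 1) * p.1 k + γ ^ i * (p.2 : Fin n → R) k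
      map_add' := by
        intro p q
        funext k
        simp only [Prod.fst_add, Prod.snd_add, Submodule.coe_add, Pi.add_apply]
        ring
      map_smul' := by
        intro r p
        funext k
        simp only [Prod.smul_fst, Prod.smul_snd, SetLike.val_smul, Pi.smul_apply,
          smul_eq_mul, RingHom.id_apply]
        ring } with hπ
  set ψ : ((Fin n → R) × C) →ₗ[R] R :=
    { toFun := fun p => ∑ k, x' k * (γ ^ i * (p.2 : Fin n → R) k)
      map_add' := by
        intro p q
        simp only [Prod.snd_add, Submodule.coe_add, Pi.add_apply, mul_add,
          Finset.sum_add_distrib]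
      map_smul' := by
        intro r p
        simp only [Prod.smul_snd, SetLike.val_smul, Pi.smul_apply, smul_eq_mul,
          RingHom.id_apply, Finset.mul_sum]
        apply Finset.sum_congr rfl
        intro k _
        ring } with hψ
  have hker : ∀ p, π p = 0 → ψ p = 0 := by
    intro p hp
    apply key (p.2 : Fin n → R) p.2.2 (fun k => -p.1 k)
    intro k
    have := congrFun hp k
    simp only [hπ, LinearMap.coe_mk, AddHom.coe_mk, Pi.zero_apply] at this
    linear_combination this
  obtain ⟨w, hw⟩ := extend_pair (baerR hγ htnil htnil') π ψ hker
  -- w is coordinatewise in (γ)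
  have hwγ : ∀ k₀, IsLocalRing.residue R (w k₀) = 0 := by
    intro k₀
    have h1 := hw ((Pi.single k₀ 1 : Fin n → R), 0)
    simp only [hπ, hψ, LinearMap.coe_mk, AddHom.coe_mk, Submodule.coe_zero,
      Pi.zero_apply, mul_zero, add_zero, Finset.sum_const_zero] at h1
    have h2 : ∑ k, w k * (γ ^ (t - 1) * (Pi.single k₀ 1 : Fin n → R) k) = γ ^ (t - 1) * w k₀ := by
      rw [Finset.sum_eq_single k₀]
      · simp [mul_comm]
      · intro b _ hb
        simp [Pi.single_apply, hb]
      · simp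
    rw [h2] at h1
    obtain ⟨d, hd⟩ := lemC hγ htnil htnil' (show 1 ≤ t from ht) (by
      have : t - 1 = t - 1 := rfl
      simpa using h1)
    rw [hd, pow_one]
    exact Ideal.Quotient.eq_zero_iff_mem.mpr (by rw [hγ]; exact Ideal.mem_span_singleton'.mpr ⟨d, by ring⟩)
  -- w pairs with γ^i C like x'
  have hw2 : ∀ c ∈ C, ∑ k, w k * (γ ^ i * c k) = ∑ k, x' k * (γ ^ i * c k) := by
    intro c hc
    have h1 := hw (0, ⟨c, hc⟩)
    simpa [hπ, hψ] using h1
  -- conclusion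
  refine ⟨fun k => x' k - w k, ?_, ?_⟩
  · show (fun k => γ ^ i * (x' k - w k)) ∈ C
    rw [← SetLike.mem_coe, hsd]
    intro c hc
    have h1 : ∀ k, γ ^ i * (x' k - w k) * c k
        = x' k * (γ ^ i * c k) - w k * (γ ^ i * c k) := by
      intro k
      ring
    calc ∑ k, γ ^ i * (x' k - w k) * c k
        = ∑ k, (x' k * (γ ^ i * c k) - w k * (γ ^ i * c k)) :=
          Finset.sum_congr rfl (fun k _ => h1 k)
      _ = (∑ k, x' k * (γ ^ i * c k)) - ∑ k, w k * (γ ^ i * c k) :=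
          Finset.sum_sub_distrib _ _
      _ = 0 := by rw [hw2 c hc, sub_self]
  · funext k
    show IsLocalRing.residue R (x' k - w k) = x k
    rw [map_sub, hx' k, hwγ k, sub_zero]

end Main


/-- Let `R` be a finite chain ring with maximal ideal `(γ)` of
nilpotency index `t` and `C` a self-dual code of length `n` over `R`. Then for
`0 ≤ i ≤ t−1` and `0 ≤ j ≤ t−1−i`, the dual of the projection of `(C : γ^(t−1−i))`
to the residue field is contained in the projection of `(C : γ^(i+j))`; in
particular the projection of `(C : γ^(t−1))` contains its own dual. -/
theorem stmt10 (R : Type*) [CommRing R] [IsLocalRing R] [Fintype R]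
    (hchain : ∀ I J : Ideal R, I ≤ J ∨ J ≤ I)
    (γ : R) (hγ : IsLocalRing.maximalIdeal R = Ideal.span {γ})
    (t : ℕ) (ht : 1 ≤ t) (htnil : γ ^ t = 0) (htnil' : γ ^ (t - 1) ≠ 0)
    (n : ℕ) (C : Submodule R (Fin n → R))
    (hsd : (C : Set (Fin n → R)) = {x | ∀ c ∈ C, ∑ i, x i * c i = 0}) :
    -- notation: `proj S` is the image of `S` in `(R/(γ))^n`, `colon r = (C : r)`
    (∀ i j : ℕ, i ≤ t - 1 → j ≤ t - 1 - i →
      {x : Fin n → IsLocalRing.ResidueField R |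
          ∀ c ∈ (fun e : Fin n → R => fun k : Fin n => IsLocalRing.residue R (e k)) ''
            {e | (fun k => γ ^ (t - 1 - i) * e k) ∈ C}, ∑ k, x k * c k = 0} ⊆
        (fun e : Fin n → R => fun k : Fin n => IsLocalRing.residue R (e k)) ''
          {e | (fun k => γ ^ (i + j) * e k) ∈ C}) ∧
    {x : Fin n → IsLocalRing.ResidueField R |
        ∀ c ∈ (fun e : Fin n → R => fun k : Fin n => IsLocalRing.residue R (e k)) ''
          {e | (fun k => γ ^ (t - 1) * e k) ∈ C}, ∑ k, x k * c k = 0} ⊆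
      (fun e : Fin n → R => fun k : Fin n => IsLocalRing.residue R (e k)) ''
        {e | (fun k => γ ^ (t - 1) * e k) ∈ C} := by
  have part1 : ∀ i j : ℕ, i ≤ t - 1 → j ≤ t - 1 - i →
      {x : Fin n → IsLocalRing.ResidueField R |
          ∀ c ∈ (fun e : Fin n → R => fun k : Fin n => IsLocalRing.residue R (e k)) ''
            {e | (fun k => γ ^ (t - 1 - i) * e k) ∈ C}, ∑ k, x k * c k = 0} ⊆
        (fun e : Fin n → R => fun k : Fin n => IsLocalRing.residue R (e k)) ''
          {e | (fun k => γ ^ (i + j) * e k) ∈ C} := by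
    intro i j hi hj x hx
    obtain ⟨e, he, heq⟩ := main_incl γ hγ t ht htnil htnil' n C hsd i hi hx
    refine ⟨e, ?_, heq⟩
    show (fun k => γ ^ (i + j) * e k) ∈ C
    have hsmul : (fun k => γ ^ (i + j) * e k) = γ ^ j • (fun k => γ ^ i * e k) := by
      funext k
      show γ ^ (i + j) * e k = γ ^ j * (γ ^ i * e k)
      rw [← mul_assoc, ← pow_add, Nat.add_comm j i]
    rw [hsmul]
    exact C.smul_mem _ he
  refine ⟨part1, ?_⟩
  have h2 := part1 0 (t - 1) (by omega) (by omega)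
  simpa using h2
end

section
/- Let R be a finite chain ring with maximal ideal (γ) of nilpotency index 2 and residue field of characteristic coprime to n. If C = ⟨f(x)h(x), γ f(x)g(x)⟩ is a cyclic code of length n over R with f g h = x^n − 1 (f, g, h monic pairwise coprime), then C is self-dual if and only if f(x) = ε g*(x) and h(x) = ε' h*(x) for some units ε, ε' of R, where f* denotes the reciprocal polynomial. -/
open Polynomial IsLocalRing

section Aux
variable {R : Type*} [CommRing R] [IsLocalRing R]

lemma aux_map_eq_zero_iff (q : R[X]) :
    q.map (residue R) = 0 ↔ ∀ i, q.coeff i ∈ maximalIdeal R := by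
  constructor
  · intro hq i
    have := congrArg (fun p => p.coeff i) hq
    simpa [coeff_map, residue_eq_zero_iff] using this
  · intro hq
    ext i
    simpa [coeff_map, residue_eq_zero_iff] using hq i

lemma aux_exists_of_map_zero (γ : R) (hγ : maximalIdeal R = Ideal.span {γ})
    (q : R[X]) (hq : q.map (residue R) = 0) : ∃ s, q = C γ * s := by
  have h1 : ∀ i, q.coeff i ∈ Ideal.span {γ} := by
    intro i; rw [← hγ]; exact (aux_map_eq_zero_iff q).1 hq i
  have h2 : q ∈ Ideal.map (C : R →+* R[X]) (Ideal.span {γ}) :=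
    Ideal.mem_map_C_iff.2 h1
  rw [Ideal.map_span, Set.image_singleton, Ideal.mem_span_singleton] at h2
  obtain ⟨s, hs⟩ := h2
  exact ⟨s, hs⟩

lemma aux_ann (γ : R) (hγ : maximalIdeal R = Ideal.span {γ}) (hγ1 : γ ≠ 0)
    (r : R) (hr : γ * r = 0) : r ∈ maximalIdeal R := by
  by_contra hmem
  have hu : IsUnit r := by
    rwa [mem_maximalIdeal, mem_nonunits_iff, not_not] at hmem
  obtain ⟨u, rfl⟩ := hu
  exact hγ1 (by
    have := congrArg (fun x => x * (↑u⁻¹ : R)) hr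
    simpa [mul_assoc] using this)

lemma aux_map_zero_of_gamma_mul (γ : R) (hγ : maximalIdeal R = Ideal.span {γ}) (hγ1 : γ ≠ 0)
    (q : R[X]) (hq : C γ * q = 0) : q.map (residue R) = 0 := by
  rw [aux_map_eq_zero_iff]
  intro i
  apply aux_ann γ hγ hγ1
  have := congrArg (fun p => p.coeff i) hq
  simpa [coeff_C_mul] using this

lemma aux_gamma_mul_eq_zero (γ : R) (hγ : maximalIdeal R = Ideal.span {γ}) (hγ2 : γ ^ 2 = 0)
    (q : R[X]) (hq : q.map (residue R) = 0) : C γ * q = 0 := by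
  obtain ⟨s, rfl⟩ := aux_exists_of_map_zero γ hγ q hq
  rw [← mul_assoc, ← C_mul, ← pow_two, hγ2, C_0, zero_mul]

/-- Torsion lemma -/
lemma aux_torsion (γ : R) (hγ : maximalIdeal R = Ideal.span {γ}) (hγ2 : γ ^ 2 = 0) (hγ1 : γ ≠ 0)
    (F GG HH M a : R[X]) (c : Rˣ) (hM : F * GG * HH = C (c : R) * M)
    (hFH : F.map (residue R) * HH.map (residue R) ≠ 0)
    (hmem : C γ * a ∈ Ideal.span {F * HH, C γ * (F * GG), M}) :
    F.map (residue R) ∣ a.map (residue R) := by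
  rw [show ({F * HH, C γ * (F * GG), M} : Set R[X]) =
      insert (F * HH) (insert (C γ * (F * GG)) {M}) from rfl] at hmem
  rw [Ideal.mem_span_insert] at hmem
  obtain ⟨p, z, hz, heq⟩ := hmem
  rw [Ideal.mem_span_insert] at hz
  obtain ⟨q, z', hz', rfl⟩ := hz
  rw [Ideal.mem_span_singleton] at hz'
  obtain ⟨r, rfl⟩ := hz'
  have hcc : (C ((c⁻¹ : Rˣ) : R) : R[X]) * C (c : R) = 1 := by
    rw [← C_mul, Units.inv_mul, C_1]
  set φ := Polynomial.mapRingHom (residue R) with hφ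
  have hres0 : residue R γ = 0 := by
    rw [residue_eq_zero_iff, hγ]; exact Ideal.subset_span rfl
  have hφγ : φ (C γ) = 0 := by simp [hφ, hres0]
  have hredeq : φ p * (φ F * φ HH) + φ M * φ r = 0 := by
    have := congrArg φ heq
    simp only [map_add, map_mul, hφγ, zero_mul, mul_zero, add_zero, zero_add] at this
    exact this.symm
  have hMm : φ F * φ GG * φ HH = φ (C (c : R)) * φ M := by
    have := congrArg φ hM; simpa only [map_mul] using this
  have hccm : φ (C ((c⁻¹ : Rˣ) : R)) * φ (C (c : R)) = 1 := by
    have := congrArg φ hcc; simpa only [map_mul, map_one] using this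
  have hfac : (φ F * φ HH) * (φ p + φ (C ((c⁻¹ : Rˣ) : R)) * φ r * φ GG) = 0 := by
    linear_combination hredeq + φ (C ((c⁻¹ : Rˣ) : R)) * φ r * hMm + φ M * φ r * hccm
  have h0 : φ p + φ (C ((c⁻¹ : Rˣ) : R)) * φ r * φ GG = 0 := by
    rcases mul_eq_zero.1 hfac with h | h
    · exact absurd h hFH
    · exact h
  have h0' : (p + C ((c⁻¹ : Rˣ) : R) * r * GG).map (residue R) = 0 := by
    simpa only [hφ, coe_mapRingHom, Polynomial.map_add, Polynomial.map_mul] using h0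
  obtain ⟨p₂, hp₂⟩ := aux_exists_of_map_zero γ hγ _ h0'
  have hkey : C γ * (a - F * (p₂ * HH + q * GG)) = 0 := by
    linear_combination heq + F * HH * hp₂ - (C ((c⁻¹ : Rˣ) : R) * r) * hM - (M * r) * hcc
  have hmz := aux_map_zero_of_gamma_mul γ hγ hγ1 _ hkey
  have : a.map (residue R) =
      F.map (residue R) * ((p₂ * HH + q * GG).map (residue R)) := by
    have h2 : (a.map (residue R)) - (F * (p₂ * HH + q * GG)).map (residue R) = 0 := by
      rw [← Polynomial.map_sub]; exact hmz
    rw [sub_eq_zero] at h2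
    rw [h2, Polynomial.map_mul]
  exact Dvd.intro _ this.symm

end Aux

section Aux3
variable {R : Type*} [CommRing R] [IsLocalRing R]

/-- Hensel-type uniqueness of monic factors. -/
lemma aux_hensel (γ : R) (hγ : maximalIdeal R = Ideal.span {γ}) (hγ2 : γ ^ 2 = 0) (hγ1 : γ ≠ 0)
    (F₁ B₁ F₂ B₂ : R[X]) (h1 : F₁.Monic) (hb1 : B₁.Monic) (h2 : F₂.Monic) (hb2 : B₂.Monic)
    (heq : F₁ * B₁ = F₂ * B₂)
    (hsep : ((F₁ * B₁).map (residue R)).Separable)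
    (hred : F₁.map (residue R) = F₂.map (residue R)) : F₁ = F₂ := by
  set φ := residue R with hφdef
  have h1m : (F₁.map φ).Monic := h1.map φ
  have hb1m : (B₁.map φ).Monic := hb1.map φ
  have hBred : B₁.map φ = B₂.map φ := by
    have hm : F₁.map φ * B₁.map φ = F₁.map φ * B₂.map φ := by
      rw [← Polynomial.map_mul, heq, Polynomial.map_mul, hred]
    exact mul_left_cancel₀ h1m.ne_zero hm
  obtain ⟨s, hs⟩ := aux_exists_of_map_zero γ hγ (F₂ - F₁)
    (by rw [Polynomial.map_sub, hred, sub_self])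
  obtain ⟨t, ht⟩ := aux_exists_of_map_zero γ hγ (B₂ - B₁)
    (by rw [Polynomial.map_sub, hBred, sub_self])
  have hγγ : (C γ : R[X]) * C γ = 0 := by rw [← C_mul, ← pow_two, hγ2, C_0]
  have hkey : C γ * (F₁ * t + s * B₁) = 0 := by
    linear_combination -heq - s * t * hγγ - F₂ * ht - (B₁ + C γ * t) * hs
  have hmz := aux_map_zero_of_gamma_mul γ hγ hγ1 _ hkey
  have hrel : (F₁.map φ) * (t.map φ) + (s.map φ) * (B₁.map φ) = 0 := by
    simpa only [Polynomial.map_add, Polynomial.map_mul] using hmz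
  have hcop : IsCoprime (F₁.map φ) (B₁.map φ) := by
    rw [Polynomial.map_mul] at hsep
    exact hsep.isCoprime
  have hdvd : F₁.map φ ∣ s.map φ := by
    have hd : F₁.map φ ∣ (s.map φ) * (B₁.map φ) := by
      refine ⟨-(t.map φ), ?_⟩
      linear_combination hrel
    exact hcop.dvd_of_dvd_mul_right hd
  have hd2 : F₂.natDegree = F₁.natDegree := by
    rw [← h2.natDegree_map φ, ← hred, h1.natDegree_map]
  have hdeg : (s.map φ).degree < (F₁.map φ).degree := by
    have hdF : (F₁.map φ).degree = (F₁.natDegree : WithBot ℕ) := by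
      rw [degree_eq_natDegree h1m.ne_zero, h1.natDegree_map]
    rw [hdF, degree_lt_iff_coeff_zero]
    intro m hm
    have hm' : F₁.natDegree ≤ m := by exact_mod_cast hm
    rw [coeff_map, hφdef, residue_eq_zero_iff]
    apply aux_ann γ hγ hγ1
    have hcm : (F₂ - F₁).coeff m = 0 := by
      rcases eq_or_lt_of_le hm' with hEq | hlt
      · rw [coeff_sub, ← hEq, h1.coeff_natDegree, show F₂.coeff F₁.natDegree = 1 by
          rw [← hd2]; exact h2.coeff_natDegree, sub_self]
      · rw [coeff_sub, coeff_eq_zero_of_natDegree_lt hlt,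
          coeff_eq_zero_of_natDegree_lt (hd2 ▸ hlt), sub_self]
    rw [hs, coeff_C_mul] at hcm
    exact hcm
  have hs0 : s.map φ = 0 := eq_zero_of_dvd_of_degree_lt hdvd hdeg
  have hz : F₂ - F₁ = 0 := by
    rw [hs]
    exact aux_gamma_mul_eq_zero γ hγ hγ2 _ hs0
  exact (sub_eq_zero.1 hz).symm

end Aux3


section Rev
variable {R : Type*} [CommRing R]

lemma aux_reflect_reflect (N : ℕ) (p : R[X]) : reflect N (reflect N p) = p := by
  ext i
  rw [coeff_reflect, coeff_reflect, revAt_invol]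

lemma aux_rev_rev (p : R[X]) (hp : p.coeff 0 ≠ 0) : p.reverse.reverse = p := by
  have h0 : p.natTrailingDegree = 0 := natTrailingDegree_eq_zero.2 (Or.inr hp)
  have h1 : p.reverse.natDegree = p.natDegree := by
    rw [reverse_natDegree, h0, Nat.sub_zero]
  show reflect p.reverse.natDegree p.reverse = p
  rw [h1]
  exact aux_reflect_reflect _ _

lemma aux_natDegree_unit_mul (u : Rˣ) (p : R[X]) :
    (C (u : R) * p).natDegree = p.natDegree := by
  apply le_antisymm (natDegree_C_mul_le _ _)
  calc p.natDegree = (C ((u⁻¹ : Rˣ) : R) * (C (u : R) * p)).natDegree := by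
        rw [← mul_assoc, ← C_mul, Units.inv_mul, C_1, one_mul]
    _ ≤ (C (u : R) * p).natDegree := natDegree_C_mul_le _ _

lemma aux_reverse_unit_mul (u : Rˣ) (p : R[X]) :
    (C (u : R) * p).reverse = C (u : R) * p.reverse := by
  show reflect (C (u : R) * p).natDegree _ = _
  rw [aux_natDegree_unit_mul, reflect_C_mul]
  rfl

lemma aux_monic_unit_mul (u : Rˣ) (p : R[X]) (hp : p.leadingCoeff = (u : R)) :
    (C ((u⁻¹ : Rˣ) : R) * p).Monic := by
  have hnd := aux_natDegree_unit_mul u⁻¹ p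
  rw [Monic, leadingCoeff, hnd, coeff_C_mul, ← leadingCoeff, hp, Units.inv_mul]

lemma aux_reverse_X_pow_sub_one [Nontrivial R] (n : ℕ) :
    ((X : R[X]) ^ n - 1).reverse = 1 - X ^ n := by
  have hC : ((X : R[X]) ^ n - 1) = X ^ n - C 1 := by rw [C_1]
  show reflect ((X : R[X]) ^ n - 1).natDegree _ = _
  rw [hC, natDegree_X_pow_sub_C, reflect_sub]
  have e1 : reflect n ((X : R[X]) ^ n) = 1 := by
    have := reflect_C_mul_X_pow n n (c := (1 : R))
    simpa [revAt_le (le_refl n)] using this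
  have e2 : reflect n (C 1 : R[X]) = X ^ n := by
    have := reflect_C_mul_X_pow n 0 (c := (1 : R))
    simpa [revAt_le (Nat.zero_le n)] using this
  rw [e1, e2]

lemma aux_reverse_mul_monic {p q : R[X]} [Nontrivial R] (hp : p.Monic) (hq : q.Monic) :
    (p * q).reverse = p.reverse * q.reverse :=
  reverse_mul (by rw [hp.leadingCoeff, hq.leadingCoeff, one_mul]; exact one_ne_zero)

end Rev


lemma aux_coprime_lift {R : Type*} [CommRing R] [IsLocalRing R]
    (γ : R) (hγ : maximalIdeal R = Ideal.span {γ}) (hγ2 : γ ^ 2 = 0) (a b : R[X])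
    (hc : IsCoprime (a.map (residue R)) (b.map (residue R))) : IsCoprime a b := by
  obtain ⟨u, v, huv⟩ := hc
  obtain ⟨u', hu'⟩ := Polynomial.map_surjective _ IsLocalRing.residue_surjective u
  obtain ⟨v', hv'⟩ := Polynomial.map_surjective _ IsLocalRing.residue_surjective v
  have h0 : (u' * a + v' * b - 1).map (residue R) = 0 := by
    rw [Polynomial.map_sub, Polynomial.map_add, Polynomial.map_mul, Polynomial.map_mul,
      hu', hv', Polynomial.map_one, huv, sub_self]
  obtain ⟨w, hw⟩ := aux_exists_of_map_zero γ hγ _ h0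
  have hγγ : (C γ : R[X]) * C γ = 0 := by rw [← C_mul, ← pow_two, hγ2, C_0]
  refine ⟨(1 - C γ * w) * u', (1 - C γ * w) * v', ?_⟩
  linear_combination (1 - C γ * w) * hw - w * w * hγγ

lemma aux_res {R : Type*} [CommRing R] [IsLocalRing R] (γ : R) (hγres : residue R γ = 0)
    (A B M D x : R[X]) (hD : M = A * D)
    (hmem : x ∈ Ideal.span {A, C γ * B, M}) :
    A.map (residue R) ∣ x.map (residue R) := by
  rw [show ({A, C γ * B, M} : Set R[X]) = insert A (insert (C γ * B) {M}) from rfl,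
    Ideal.mem_span_insert] at hmem
  obtain ⟨p, z, hz, rfl⟩ := hmem
  rw [Ideal.mem_span_insert] at hz
  obtain ⟨q, z', hz', rfl⟩ := hz
  rw [Ideal.mem_span_singleton] at hz'
  obtain ⟨r, rfl⟩ := hz'
  refine ⟨p.map (residue R) + D.map (residue R) * r.map (residue R), ?_⟩
  subst hD
  simp only [Polynomial.map_add, Polynomial.map_mul, Polynomial.map_C, hγres, C_0, zero_mul]
  ring

lemma aux_sep {k : Type*} [Field k] (n : ℕ) (hcast : (n : k) ≠ 0) :
    ((X : k[X]) ^ n - 1).Separable := by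
  have := separable_X_pow_sub_C (1 : k) hcast one_ne_zero
  simpa using this

lemma aux_span_quot {A : Type*} [CommRing A] (m a b : A) :
    Ideal.span {Ideal.Quotient.mk (Ideal.span {m}) a, Ideal.Quotient.mk (Ideal.span {m}) b} =
      Ideal.map (Ideal.Quotient.mk (Ideal.span {m})) (Ideal.span {a, b, m}) := by
  set π := Ideal.Quotient.mk (Ideal.span {m}) with hπ
  have hm : π m = 0 := by
    rw [hπ, Ideal.Quotient.eq_zero_iff_mem]; exact Ideal.subset_span rfl
  rw [Ideal.map_span, Set.image_insert_eq, Set.image_insert_eq, Set.image_singleton, hm]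
  rw [show (insert (π a) (insert (π b) {(0 : A ⧸ Ideal.span {m})}) : Set _) =
      insert 0 {π a, π b} from by ext x; simp; tauto]
  exact (Submodule.span_insert_zero).symm

lemma aux_comap {A : Type*} [CommRing A] (m a b : A) :
    Ideal.comap (Ideal.Quotient.mk (Ideal.span {m}))
      (Ideal.span {Ideal.Quotient.mk (Ideal.span {m}) a, Ideal.Quotient.mk (Ideal.span {m}) b}) =
      Ideal.span {a, b, m} := by
  rw [aux_span_quot, Ideal.comap_map_of_surjective _ Ideal.Quotient.mk_surjective, ← RingHom.ker_eq_comap_bot, Ideal.mk_ker]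
  rw [sup_eq_left]
  apply Ideal.span_mono
  intro x hx
  simp only [Set.mem_singleton_iff] at hx
  subst hx
  simp

/-- Over a finite chain ring `R` with maximal ideal `(γ)` of
nilpotency index 2 with residue characteristic coprime to `n`, the cyclic code
`C = ⟨f h, γ f g⟩` of length `n` (where `f g h = x^n − 1` with `f, g, h` monic and
pairwise coprime) is self-dual iff `f = ε g*` and `h = ε' h*` for units `ε, ε'`.
Here the dual of `C` is `⟨g* h*, γ g* f*⟩` and `a*` is the reciprocal polynomial. -/
theorem stmt11 (R : Type*) [CommRing R] [IsLocalRing R] [Fintype R]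
    (hchain : ∀ I J : Ideal R, I ≤ J ∨ J ≤ I)
    (γ : R) (hγ : IsLocalRing.maximalIdeal R = Ideal.span {γ})
    (hγ2 : γ ^ 2 = 0) (hγ1 : γ ≠ 0)
    (n : ℕ) (hn : 1 ≤ n)
    (hcop : ∀ q : ℕ, CharP (IsLocalRing.ResidueField R) q → Nat.Coprime q n)
    (f g h : R[X]) (hf : f.Monic) (hg : g.Monic) (hh : h.Monic)
    (hfgh : f * g * h = X ^ n - 1)
    (hfg : IsCoprime f g) (hfh : IsCoprime f h) (hgh : IsCoprime g h) :
    Ideal.span {Ideal.Quotient.mk (Ideal.span {(X : R[X]) ^ n - 1}) (f * h),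
        Ideal.Quotient.mk (Ideal.span {(X : R[X]) ^ n - 1}) (C γ * (f * g))} =
      Ideal.span {Ideal.Quotient.mk (Ideal.span {(X : R[X]) ^ n - 1}) (g.reverse * h.reverse),
        Ideal.Quotient.mk (Ideal.span {(X : R[X]) ^ n - 1})
          (C γ * (g.reverse * f.reverse))} ↔
      (∃ ε : Rˣ, f = C (ε : R) * g.reverse) ∧ (∃ ε' : Rˣ, h = C (ε' : R) * h.reverse) := by
  haveI : Nontrivial R := ⟨⟨γ, 0, hγ1⟩⟩
  have hn0 : n ≠ 0 := by omega
  -- constant coefficients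
  have hc0 : f.coeff 0 * g.coeff 0 * h.coeff 0 = -1 := by
    have := congrArg (fun p : R[X] => p.coeff 0) hfgh
    simp only [mul_coeff_zero, coeff_sub, coeff_X_pow, coeff_one] at this
    rw [if_neg (Ne.symm hn0)] at this
    simpa using this
  have huf : IsUnit (f.coeff 0) :=
    IsUnit.of_mul_eq_one (g.coeff 0 * h.coeff 0 * (-1)) (by linear_combination -hc0)
  have hug : IsUnit (g.coeff 0) :=
    IsUnit.of_mul_eq_one (f.coeff 0 * h.coeff 0 * (-1)) (by linear_combination -hc0)
  have huh : IsUnit (h.coeff 0) :=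
    IsUnit.of_mul_eq_one (f.coeff 0 * g.coeff 0 * (-1)) (by linear_combination -hc0)
  set wU := huf.unit with hwU
  set uU := hug.unit with huU
  set vU := huh.unit with hvU
  have hwv : (wU : R) = f.coeff 0 := huf.unit_spec
  have huv : (uU : R) = g.coeff 0 := hug.unit_spec
  have hvv : (vU : R) = h.coeff 0 := huh.unit_spec
  have hf0 : f.coeff 0 ≠ 0 := huf.ne_zero
  have hg0 : g.coeff 0 ≠ 0 := hug.ne_zero
  have hh0 : h.coeff 0 ≠ 0 := huh.ne_zero
  -- leading coefficients of reverses
  have hfl : f.reverse.leadingCoeff = (wU : R) := by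
    rw [reverse_leadingCoeff, trailingCoeff, natTrailingDegree_eq_zero.2 (Or.inr hf0), hwv]
  have hgl : g.reverse.leadingCoeff = (uU : R) := by
    rw [reverse_leadingCoeff, trailingCoeff, natTrailingDegree_eq_zero.2 (Or.inr hg0), huv]
  have hhl : h.reverse.leadingCoeff = (vU : R) := by
    rw [reverse_leadingCoeff, trailingCoeff, natTrailingDegree_eq_zero.2 (Or.inr hh0), hvv]
  -- normalized reverses
  set G := C ((uU⁻¹ : Rˣ) : R) * g.reverse with hG
  set Ff := C ((wU⁻¹ : Rˣ) : R) * f.reverse with hFf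
  set Hh := C ((vU⁻¹ : Rˣ) : R) * h.reverse with hHh
  have hGm : G.Monic := aux_monic_unit_mul uU _ hgl
  have hFm : Ff.Monic := aux_monic_unit_mul wU _ hfl
  have hHm : Hh.Monic := aux_monic_unit_mul vU _ hhl
  have hrev : f.reverse * g.reverse * h.reverse = 1 - X ^ n := by
    rw [← aux_reverse_mul_monic hf hg, ← aux_reverse_mul_monic (hf.mul hg) hh, hfgh,
      aux_reverse_X_pow_sub_one]
  -- the unit product
  have hu1C : (C (uU : R) : R[X]) * C ((uU⁻¹ : Rˣ) : R) = 1 := by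
    rw [← C_mul, Units.mul_inv, C_1]
  have hv1C : (C (vU : R) : R[X]) * C ((vU⁻¹ : Rˣ) : R) = 1 := by
    rw [← C_mul, Units.mul_inv, C_1]
  have hw1C : (C (wU : R) : R[X]) * C ((wU⁻¹ : Rˣ) : R) = 1 := by
    rw [← C_mul, Units.mul_inv, C_1]
  have hcu : ((uU⁻¹ : Rˣ) : R) * ((wU⁻¹ : Rˣ) : R) * ((vU⁻¹ : Rˣ) : R) = -1 := by
    have h1 : ((uU⁻¹ : Rˣ) : R) * g.coeff 0 = 1 := by
      rw [← huv]; exact Units.inv_mul _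
    have h2 : ((wU⁻¹ : Rˣ) : R) * f.coeff 0 = 1 := by
      rw [← hwv]; exact Units.inv_mul _
    have h3 : ((vU⁻¹ : Rˣ) : R) * h.coeff 0 = 1 := by
      rw [← hvv]; exact Units.inv_mul _
    have e : (((uU⁻¹ : Rˣ) : R) * g.coeff 0) * (((wU⁻¹ : Rˣ) : R) * f.coeff 0) *
        (((vU⁻¹ : Rˣ) : R) * h.coeff 0) = 1 := by rw [h1, h2, h3]; ring
    linear_combination (((uU⁻¹ : Rˣ) : R) * ((wU⁻¹ : Rˣ) : R) * ((vU⁻¹ : Rˣ) : R)) * hc0 - e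
  have hcuC : (C ((uU⁻¹ : Rˣ) : R) : R[X]) * C ((wU⁻¹ : Rˣ) : R) * C ((vU⁻¹ : Rˣ) : R)
      = -1 := by
    rw [← C_mul, ← C_mul, hcu]
    simp
  have hGFH : G * (Ff * Hh) = X ^ n - 1 := by
    rw [hG, hFf, hHh]
    linear_combination (C ((uU⁻¹ : Rˣ) : R) * C ((wU⁻¹ : Rˣ) : R) * C ((vU⁻¹ : Rˣ) : R)) * hrev
      + ((1 : R[X]) - X ^ n) * hcuC
  -- residue field facts
  have hres0 : residue R γ = 0 := by
    rw [residue_eq_zero_iff, hγ]; exact Ideal.subset_span rfl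
  have hchar : ((n : ℕ) : ResidueField R) ≠ 0 := by
    intro h0
    have hq : CharP (ResidueField R) (ringChar (ResidueField R)) := ringChar.charP _
    have hdvd : ringChar (ResidueField R) ∣ n :=
      (CharP.cast_eq_zero_iff _ (ringChar (ResidueField R)) n).1 h0
    have hco := hcop (ringChar (ResidueField R)) hq
    have h1 : ringChar (ResidueField R) ∣ 1 := by
      rw [← hco]; exact Nat.dvd_gcd dvd_rfl hdvd
    have h2 : ringChar (ResidueField R) = 1 := Nat.dvd_one.1 h1
    have h3 : ((1 : ℕ) : ResidueField R) = 0 := by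
      rw [← h2]; exact CharP.cast_eq_zero _ _
    simpa using h3
  have hsepk : ((X : (ResidueField R)[X]) ^ n - 1).Separable := aux_sep n hchar
  have hmapM : ((X : R[X]) ^ n - 1).map (residue R) = X ^ n - 1 := by
    simp [Polynomial.map_sub, Polynomial.map_pow]
  have hsepfgh : ((f * (g * h)).map (residue R)).Separable := by
    rw [show f * (g * h) = X ^ n - 1 by linear_combination hfgh, hmapM]; exact hsepk
  have hrevk : f.reverse.map (residue R) * g.reverse.map (residue R) *
      h.reverse.map (residue R) = 1 - (X : (ResidueField R)[X]) ^ n := by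
    rw [← Polynomial.map_mul, ← Polynomial.map_mul, hrev]
    simp [Polynomial.map_sub, Polynomial.map_pow]
  have hXn1ne : (1 - (X : (ResidueField R)[X]) ^ n) ≠ 0 := by
    have hmon : ((X : (ResidueField R)[X]) ^ n - C 1).Monic := monic_X_pow_sub_C _ hn0
    intro h0
    apply hmon.ne_zero
    rw [C_1]
    linear_combination -h0
  constructor
  · -- forward direction
    intro hCD
    have hJ : Ideal.span {f * h, C γ * (f * g), (X : R[X]) ^ n - 1} =
        Ideal.span {g.reverse * h.reverse, C γ * (g.reverse * f.reverse),
          (X : R[X]) ^ n - 1} := by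
      rw [← aux_comap ((X : R[X]) ^ n - 1) (f * h) (C γ * (f * g)),
        ← aux_comap ((X : R[X]) ^ n - 1) (g.reverse * h.reverse)
          (C γ * (g.reverse * f.reverse)), hCD]
    -- γ f ∈ J₁ = J₂
    obtain ⟨pg, ph, hph⟩ := hgh
    have hγf1 : C γ * f ∈ Ideal.span {f * h, C γ * (f * g), (X : R[X]) ^ n - 1} := by
      have he : C γ * f = (C γ * ph) * (f * h) + pg * (C γ * (f * g)) := by
        linear_combination -(C γ * f) * hph
      rw [he]
      exact Ideal.add_mem _ (Ideal.mul_mem_left _ _ (Ideal.subset_span (by simp)))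
        (Ideal.mul_mem_left _ _ (Ideal.subset_span (by simp)))
    have hγf2 : C γ * f ∈ Ideal.span {g.reverse * h.reverse,
        C γ * (g.reverse * f.reverse), (X : R[X]) ^ n - 1} := hJ ▸ hγf1
    have hMrev : g.reverse * f.reverse * h.reverse =
        C (((-1 : Rˣ) : R)) * ((X : R[X]) ^ n - 1) := by
      rw [show (((-1 : Rˣ) : R)) = (-1 : R) by simp]
      rw [map_neg, C_1]
      linear_combination hrev
    have hFH2 : g.reverse.map (residue R) * h.reverse.map (residue R) ≠ 0 := by
      intro h0
      apply hXn1ne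
      calc (1 : (ResidueField R)[X]) - X ^ n
          = f.reverse.map (residue R) * (g.reverse.map (residue R) *
            h.reverse.map (residue R)) := by rw [← hrevk]; ring
        _ = 0 := by rw [h0, mul_zero]
    have hdvd1 : g.reverse.map (residue R) ∣ f.map (residue R) :=
      aux_torsion γ hγ hγ2 hγ1 g.reverse f.reverse h.reverse ((X : R[X]) ^ n - 1) f (-1)
        hMrev hFH2 hγf2
    -- γ g* ∈ J₂ = J₁
    have hsep_fh_rev : IsCoprime (f.reverse.map (residue R)) (h.reverse.map (residue R)) := by
      have hdvd : f.reverse.map (residue R) * h.reverse.map (residue R) ∣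
          ((X : (ResidueField R)[X]) ^ n - 1) :=
        ⟨-(g.reverse.map (residue R)), by linear_combination hrevk⟩
      exact ((hsepk.of_dvd hdvd)).isCoprime
    have hcop_fh : IsCoprime f.reverse h.reverse := aux_coprime_lift γ hγ hγ2 _ _ hsep_fh_rev
    obtain ⟨pa, pb, hpab⟩ := hcop_fh
    have hγg1 : C γ * g.reverse ∈ Ideal.span {g.reverse * h.reverse,
        C γ * (g.reverse * f.reverse), (X : R[X]) ^ n - 1} := by
      have he : C γ * g.reverse = (C γ * pb) * (g.reverse * h.reverse) +
          pa * (C γ * (g.reverse * f.reverse)) := by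
        linear_combination -(C γ * g.reverse) * hpab
      rw [he]
      exact Ideal.add_mem _ (Ideal.mul_mem_left _ _ (Ideal.subset_span (by simp)))
        (Ideal.mul_mem_left _ _ (Ideal.subset_span (by simp)))
    have hγg2 : C γ * g.reverse ∈
        Ideal.span {f * h, C γ * (f * g), (X : R[X]) ^ n - 1} := hJ.symm ▸ hγg1
    have hFH1 : f.map (residue R) * h.map (residue R) ≠ 0 :=
      mul_ne_zero (hf.map (residue R)).ne_zero (hh.map (residue R)).ne_zero
    have hdvd2 : f.map (residue R) ∣ g.reverse.map (residue R) :=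
      aux_torsion γ hγ hγ2 hγ1 f g h ((X : R[X]) ^ n - 1) g.reverse 1
        (by rw [hfgh, Units.val_one, C_1, one_mul]) hFH1 hγg2
    -- conclude f = G
    have hgrevG : g.reverse = C ((uU : R)) * G := by
      rw [hG, ← mul_assoc, hu1C, one_mul]
    have hassoc1 : Associated (G.map (residue R)) (g.reverse.map (residue R)) := by
      refine ⟨(Polynomial.isUnit_C.2 (uU.isUnit.map (residue R))).unit, ?_⟩
      rw [IsUnit.unit_spec, hgrevG]
      simp only [Polynomial.map_mul, Polynomial.map_C]
      ring
    have hassoc : Associated (f.map (residue R)) (G.map (residue R)) :=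
      (associated_of_dvd_dvd hdvd2 hdvd1).trans hassoc1.symm
    have hfG : f.map (residue R) = G.map (residue R) :=
      eq_of_monic_of_associated (hf.map _) (hGm.map _) hassoc
    have hfeq : f = G := by
      refine aux_hensel γ hγ hγ2 hγ1 f (g * h) G (Ff * Hh) hf (hg.mul hh) hGm
        (hFm.mul hHm) ?_ hsepfgh hfG
      rw [← mul_assoc, hfgh, ← hGFH]
    -- now handle h
    have hfh1 : f * h ∈ Ideal.span {f * h, C γ * (f * g), (X : R[X]) ^ n - 1} :=
      Ideal.subset_span (by simp)
    have hfh2 : f * h ∈ Ideal.span {g.reverse * h.reverse,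
        C γ * (g.reverse * f.reverse), (X : R[X]) ^ n - 1} := hJ ▸ hfh1
    have hd3 : (g.reverse * h.reverse).map (residue R) ∣ (f * h).map (residue R) :=
      aux_res γ hres0 (g.reverse * h.reverse) (g.reverse * f.reverse)
        ((X : R[X]) ^ n - 1) (-f.reverse) (f * h) (by linear_combination hrev) hfh2
    have hgh1 : g.reverse * h.reverse ∈ Ideal.span {g.reverse * h.reverse,
        C γ * (g.reverse * f.reverse), (X : R[X]) ^ n - 1} :=
      Ideal.subset_span (by simp)
    have hgh2 : g.reverse * h.reverse ∈
        Ideal.span {f * h, C γ * (f * g), (X : R[X]) ^ n - 1} := hJ.symm ▸ hgh1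
    have hd4 : (f * h).map (residue R) ∣ (g.reverse * h.reverse).map (residue R) :=
      aux_res γ hres0 (f * h) (f * g) ((X : R[X]) ^ n - 1) g (g.reverse * h.reverse)
        (by linear_combination -hfgh) hgh2
    have hghGH : g.reverse * h.reverse = C ((uU : R)) * C ((vU : R)) * (G * Hh) := by
      rw [hG, hHh]
      linear_combination (-(g.reverse * h.reverse) * (C ((vU : R)) * C ((vU⁻¹ : Rˣ) : R)))
        * hu1C - (g.reverse * h.reverse) * hv1C
    have hassoc2 : Associated ((G * Hh).map (residue R))
        ((g.reverse * h.reverse).map (residue R)) := by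
      refine ⟨(Polynomial.isUnit_C.2 ((uU * vU).isUnit.map (residue R))).unit, ?_⟩
      rw [IsUnit.unit_spec, hghGH]
      simp only [Polynomial.map_mul, Polynomial.map_C, Units.val_mul, map_mul, C_mul]
      ring
    have hassoc3 : Associated ((f * h).map (residue R)) ((G * Hh).map (residue R)) :=
      (associated_of_dvd_dvd hd4 hd3).trans hassoc2.symm
    have hfhGH : (f * h).map (residue R) = (G * Hh).map (residue R) :=
      eq_of_monic_of_associated ((hf.mul hh).map _) ((hGm.mul hHm).map _) hassoc3
    have hhH : h.map (residue R) = Hh.map (residue R) := by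
      have e1 : f.map (residue R) * h.map (residue R) =
          f.map (residue R) * Hh.map (residue R) := by
        rw [← Polynomial.map_mul]
        rw [hfhGH, Polynomial.map_mul, ← hfG]
      exact mul_left_cancel₀ (hf.map (residue R)).ne_zero e1
    have hheq : h = Hh := by
      refine aux_hensel γ hγ hγ2 hγ1 h (f * g) Hh (Ff * G) hh (hf.mul hg) hHm
        (hFm.mul hGm) ?_ ?_ hhH
      · rw [show h * (f * g) = f * g * h by ring, hfgh]
        linear_combination -hGFH
      · rw [show h * (f * g) = X ^ n - 1 by linear_combination hfgh, hmapM]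
        exact hsepk
    exact ⟨⟨uU⁻¹, hfeq⟩, ⟨vU⁻¹, hheq⟩⟩
  · -- backward direction
    rintro ⟨⟨ε, hfe⟩, ⟨ε', hhe⟩⟩
    have hCe : (C ((ε⁻¹ : Rˣ) : R) : R[X]) * C ((ε : Rˣ) : R) = 1 := by
      rw [← C_mul, Units.inv_mul, C_1]
    have hCe' : (C ((ε'⁻¹ : Rˣ) : R) : R[X]) * C ((ε' : Rˣ) : R) = 1 := by
      rw [← C_mul, Units.inv_mul, C_1]
    have hfrev : f.reverse = C ((ε : Rˣ) : R) * g := by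
      rw [hfe, aux_reverse_unit_mul ε g.reverse, aux_rev_rev g hg0]
    have hgrev : g.reverse = C ((ε⁻¹ : Rˣ) : R) * f := by
      rw [hfe, ← mul_assoc, hCe, one_mul]
    have hhrev : h.reverse = C ((ε'⁻¹ : Rˣ) : R) * h := by
      nth_rewrite 2 [hhe]
      rw [← mul_assoc, hCe', one_mul]
    have hgenB : C γ * (g.reverse * f.reverse) = C γ * (f * g) := by
      rw [hgrev, hfrev]
      linear_combination (C γ * f * g) * hCe
    have hgenA : g.reverse * h.reverse = C ((ε⁻¹ : Rˣ) : R) * C ((ε'⁻¹ : Rˣ) : R) * (f * h) := by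
      rw [hgrev, hhrev]; ring
    have hgenA' : f * h = C ((ε : Rˣ) : R) * C ((ε' : Rˣ) : R) * (g.reverse * h.reverse) := by
      rw [hfe]
      nth_rewrite 1 [hhe]
      ring
    set π := Ideal.Quotient.mk (Ideal.span {(X : R[X]) ^ n - 1}) with hπ
    apply le_antisymm
    · rw [Ideal.span_le]
      rintro x (rfl | rfl)
      · have e : π (f * h) = π (C ((ε : Rˣ) : R) * C ((ε' : Rˣ) : R)) *
            π (g.reverse * h.reverse) := by
          rw [← map_mul]; exact congrArg π hgenA'
        rw [e]
        exact Ideal.mul_mem_left _ _ (Ideal.subset_span (Set.mem_insert _ _))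
      · rw [← hgenB]
        exact Ideal.subset_span (by simp)
    · rw [Ideal.span_le]
      rintro x (rfl | rfl)
      · have e : π (g.reverse * h.reverse) = π (C ((ε⁻¹ : Rˣ) : R) * C ((ε'⁻¹ : Rˣ) : R)) *
            π (f * h) := by
          rw [← map_mul]; exact congrArg π hgenA
        rw [e]
        exact Ideal.mul_mem_left _ _ (Ideal.subset_span (Set.mem_insert _ _))
      · rw [hgenB]
        exact Ideal.subset_span (by simp)
end
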